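/- arXiv:1907.12096 — 4 statements merged into one kernel-verified Lean document; each statement's English description precedes it below -/
import Mathlib

section
/- Let b : ℝ → ℝ be nonnegative, locally Lipschitz and nondecreasing on (0,∞), let g : [0,∞) → ℝ be continuous, and let a ≥ 0. Suppose X : [0,T) → ℝ satisfies X(t) = a + ∫₀ᵗ b(X(s)) ds + g(t) and blows up at the finite time T < ∞. Then ∫_c^∞ 1/b(s) ds < ∞ for some (equivalently, any sufficiently large) c > 0. -/
open MeasureTheory Set Filter
open scoped ENNReal

/-- If `X(t) = a + ∫₀ᵗ b(X(s)) ds + g(t)` blows up at a finite time `T`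
(i.e. `limsup_{t→T⁻} X(t) = +∞`), then `b` satisfies the Osgood condition
`∫_c^∞ ds / b(s) < ∞` for some `c > 0` (with `1/0 = ∞`). -/
theorem stmt_1 (b : ℝ → ℝ) (hb0 : ∀ x, 0 ≤ b x) (hbLip : LocallyLipschitz b)
    (hbmono : MonotoneOn b (Set.Ioi (0:ℝ)))
    (g : ℝ → ℝ) (hg : Continuous g) (a : ℝ) (ha : 0 ≤ a)
    (T : ℝ) (hT : 0 < T) (X : ℝ → ℝ)
    (hXcont : ContinuousOn X (Set.Ico 0 T))
    (hX : ∀ t ∈ Set.Ico (0:ℝ) T, X t = a + (∫ s in (0:ℝ)..t, b (X s)) + g t)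
    (hblow : ∀ M : ℝ, ∃ᶠ t in nhdsWithin T (Set.Iio T), M < X t) :
    ∃ c > 0, (∫⁻ s in Set.Ioi c, (ENNReal.ofReal (b s))⁻¹) < ⊤ := by
  classical
  -- bound for g on [0, T]
  obtain ⟨G, hG⟩ : ∃ G, ∀ t ∈ Icc (0:ℝ) T, |g t| ≤ G := by
    obtain ⟨G, hG⟩ := isCompact_Icc.exists_bound_of_continuousOn
      (hg.continuousOn : ContinuousOn g (Icc 0 T))
    exact ⟨G, fun t ht => by simpa [Real.norm_eq_abs] using hG t ht⟩
  have hG0 : 0 ≤ G := le_trans (abs_nonneg _) (hG 0 ⟨le_rfl, hT.le⟩)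
  set c0 : ℝ := a + G + 1 with hc0def
  have hc0 : 0 < c0 := by positivity
  set Y : ℝ → ℝ := fun t => X t - g t with hYdef
  set L : ℕ → ℝ := fun k => G + c0 * 2 ^ k with hLdef
  have hbc : Continuous b := hbLip.continuous
  have hbXcont : ContinuousOn (fun s => b (X s)) (Ico 0 T) := hbc.comp_continuousOn hXcont
  have h0mem : (0:ℝ) ∈ Ico (0:ℝ) T := ⟨le_rfl, hT⟩
  have hInt : ∀ t1 t2, t1 ∈ Ico (0:ℝ) T → t2 ∈ Ico (0:ℝ) T →
      IntervalIntegrable (fun s => b (X s)) volume t1 t2 := by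
    intro t1 t2 h1 h2
    exact (hbXcont.mono (Set.ordConnected_Ico.uIcc_subset h1 h2)).intervalIntegrable
  have hYX : ∀ t ∈ Ico (0:ℝ) T, Y t = a + ∫ s in (0:ℝ)..t, b (X s) := by
    intro t ht
    simp only [hYdef]
    rw [hX t ht]; ring
  have hYdiff : ∀ t1 t2, t1 ∈ Ico (0:ℝ) T → t2 ∈ Ico (0:ℝ) T →
      Y t2 - Y t1 = ∫ s in t1..t2, b (X s) := by
    intro t1 t2 h1 h2
    have hadd := intervalIntegral.integral_add_adjacent_intervals
      (hInt 0 t1 h0mem h1) (hInt t1 t2 h1 h2)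
    rw [hYX t1 h1, hYX t2 h2]
    linarith [hadd]
  have hYmono : ∀ t1 t2, t1 ∈ Ico (0:ℝ) T → t2 ∈ Ico (0:ℝ) T → t1 ≤ t2 → Y t1 ≤ Y t2 := by
    intro t1 t2 h1 h2 hle
    have h := hYdiff t1 t2 h1 h2
    have hnn : 0 ≤ ∫ s in t1..t2, b (X s) :=
      intervalIntegral.integral_nonneg hle (fun u _ => hb0 (X u))
    linarith
  have hY0 : Y 0 = a := by
    rw [hYX 0 h0mem, intervalIntegral.integral_same]; ring
  have hYcont : ContinuousOn Y (Ico 0 T) := hXcont.sub hg.continuousOn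
  -- hitting times
  have hit : ∀ M, a ≤ M → ∃ t ∈ Ico (0:ℝ) T, Y t = M := by
    intro M hM
    obtain ⟨u, huM, hu1, hu2⟩ : ∃ u, M + G < X u ∧ 0 < u ∧ u < T := by
      have hev : ∀ᶠ t in nhdsWithin T (Iio T), 0 < t ∧ t < T := by
        refine Filter.Eventually.and ?_ ?_
        · exact eventually_nhdsWithin_of_eventually_nhds (eventually_gt_nhds hT)
        · exact eventually_mem_nhdsWithin
      obtain ⟨t, ht1, ht2, ht3⟩ := ((hblow (M + G)).and_eventually hev).exists
      exact ⟨t, ht1, ht2, ht3⟩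
    have huIco : u ∈ Ico (0:ℝ) T := ⟨hu1.le, hu2⟩
    have hgu : |g u| ≤ G := hG u ⟨hu1.le, hu2.le⟩
    have hYu : M < Y u := by
      have := abs_le.1 hgu
      simp only [hYdef]; linarith
    have husub : Icc (0:ℝ) u ⊆ Ico 0 T := fun x hx => ⟨hx.1, lt_of_le_of_lt hx.2 hu2⟩
    have hIVT := intermediate_value_Icc hu1.le (hYcont.mono husub)
    have hMmem : M ∈ Icc (Y 0) (Y u) := ⟨hY0 ▸ hM, hYu.le⟩
    obtain ⟨t, ht, hYt⟩ := hIVT hMmem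
    exact ⟨t, husub ht, hYt⟩
  have hLa : ∀ k, a ≤ L k := by
    intro k
    have h1 : (1:ℝ) ≤ 2 ^ k := one_le_pow₀ (by norm_num)
    simp only [hLdef]
    nlinarith
  choose τ hτmem hτval using fun k => hit (L k) (hLa k)
  have hτlt : ∀ k, τ k < τ (k + 1) := by
    intro k
    by_contra h
    push_neg at h
    have h2 := hYmono _ _ (hτmem (k + 1)) (hτmem k) h
    rw [hτval, hτval] at h2
    simp only [hLdef] at h2
    have hp : (0:ℝ) < 2 ^ k := by positivity
    have he : (2:ℝ) ^ (k + 1) = 2 * 2 ^ k := by ring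
    rw [he] at h2
    nlinarith
  set B : ℕ → ℝ := fun k => 2 * G + c0 * 2 ^ (k + 1) with hBdef
  have hBpos : ∀ k, 0 < B k := by
    intro k
    have : (0:ℝ) < 2 ^ (k + 1) := by positivity
    simp only [hBdef]; nlinarith
  -- key differential inequality
  have hkey : ∀ k, c0 * 2 ^ k ≤ (τ (k + 1) - τ k) * b (B k) := by
    intro k
    have hIcc : Icc (τ k) (τ (k + 1)) ⊆ Ico 0 T :=
      fun s hs => ⟨(hτmem k).1.trans hs.1, lt_of_le_of_lt hs.2 (hτmem (k + 1)).2⟩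
    have hXs : ∀ s ∈ Icc (τ k) (τ (k + 1)), b (X s) ≤ b (B k) := by
      intro s hs
      have hsIco := hIcc hs
      have h1 : Y (τ k) ≤ Y s := hYmono _ _ (hτmem k) hsIco hs.1
      have h2 : Y s ≤ Y (τ (k + 1)) := hYmono _ _ hsIco (hτmem (k + 1)) hs.2
      rw [hτval] at h1 h2
      have hgs := abs_le.1 (hG s ⟨hsIco.1, hsIco.2.le⟩)
      have hYXs : X s = Y s + g s := by simp [hYdef]
      have hpow : (0:ℝ) < 2 ^ k := by positivity
      have hXpos : 0 < X s := by
        simp only [hLdef] at h1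
        nlinarith
      have hXle : X s ≤ B k := by
        simp only [hLdef] at h2
        simp only [hBdef]
        nlinarith
      exact hbmono (mem_Ioi.2 hXpos) (mem_Ioi.2 (hBpos k)) hXle
    have hle := intervalIntegral.integral_mono_on (hτlt k).le
      (hInt _ _ (hτmem k) (hτmem (k + 1))) intervalIntegrable_const hXs
    rw [intervalIntegral.integral_const, smul_eq_mul] at hle
    have hdiff := hYdiff (τ k) (τ (k + 1)) (hτmem k) (hτmem (k + 1))
    rw [hτval, hτval] at hdiff
    simp only [hLdef] at hdiff
    have hring : c0 * 2 ^ (k + 1) - c0 * 2 ^ k = c0 * 2 ^ k := by ring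
    nlinarith [hle, hdiff]
  have hbBpos : ∀ k, 0 < b (B k) := by
    intro k
    rcases (hb0 (B k)).lt_or_eq with h | h
    · exact h
    · exfalso
      have := hkey k
      rw [← h] at this
      have hpow : (0:ℝ) < 2 ^ k := by positivity
      nlinarith
  -- per-block integral estimate
  have hpiece : ∀ k, (∫⁻ s in Ico (B k) (B (k + 1)), (ENNReal.ofReal (b s))⁻¹) ≤
      ENNReal.ofReal (2 * (τ (k + 1) - τ k)) := by
    intro k
    have h1 : (∫⁻ s in Ico (B k) (B (k + 1)), (ENNReal.ofReal (b s))⁻¹) ≤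
        ∫⁻ _ in Ico (B k) (B (k + 1)), (ENNReal.ofReal (b (B k)))⁻¹ := by
      apply setLIntegral_mono measurable_const
      intro x hx
      have hxpos : 0 < x := lt_of_lt_of_le (hBpos k) hx.1
      have hbx : b (B k) ≤ b x := hbmono (mem_Ioi.2 (hBpos k)) (mem_Ioi.2 hxpos) hx.1
      exact ENNReal.inv_le_inv.2 (ENNReal.ofReal_le_ofReal hbx)
    rw [setLIntegral_const, Real.volume_Ico] at h1
    have hd0 : 0 ≤ τ (k + 1) - τ k := sub_nonneg.2 (hτlt k).le
    have h3 : ENNReal.ofReal (B (k + 1) - B k) ≤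
        ENNReal.ofReal (2 * (τ (k + 1) - τ k)) * ENNReal.ofReal (b (B k)) := by
      rw [← ENNReal.ofReal_mul (by linarith)]
      apply ENNReal.ofReal_le_ofReal
      have := hkey k
      have hring : B (k + 1) - B k = 2 * (c0 * 2 ^ k) := by simp only [hBdef]; ring
      nlinarith
    refine h1.trans ?_
    calc (ENNReal.ofReal (b (B k)))⁻¹ * ENNReal.ofReal (B (k + 1) - B k)
        ≤ (ENNReal.ofReal (b (B k)))⁻¹ *
          (ENNReal.ofReal (2 * (τ (k + 1) - τ k)) * ENNReal.ofReal (b (B k))) :=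
          mul_le_mul_right h3 _
      _ = ENNReal.ofReal (2 * (τ (k + 1) - τ k)) := by
          rw [mul_comm (ENNReal.ofReal (2 * (τ (k + 1) - τ k))) _, ← mul_assoc,
            ENNReal.inv_mul_cancel (ENNReal.ofReal_pos.2 (hbBpos k)).ne' ENNReal.ofReal_ne_top,
            one_mul]
  -- covering
  have hcover : Ioi (B 0) ⊆ ⋃ k, Ico (B k) (B (k + 1)) := by
    intro s hs
    have hex : ∃ k, s < B k := by
      obtain ⟨n, hn⟩ := exists_nat_gt ((s - 2 * G) / c0)
      refine ⟨n, ?_⟩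
      have h2 : (n:ℝ) < 2 ^ (n + 1) := by
        exact_mod_cast Nat.lt_of_lt_of_le (Nat.lt_two_pow_self (n := n))
          (Nat.pow_le_pow_right (by norm_num) (Nat.le_succ n))
      have h3 : s - 2 * G < c0 * n := by
        rw [div_lt_iff₀ hc0] at hn
        linarith
      simp only [hBdef]
      nlinarith
    set n := Nat.find hex with hndef
    have hn1 : s < B n := Nat.find_spec hex
    have hn0 : n ≠ 0 := by
      intro h
      rw [h] at hn1
      exact absurd hs (not_lt.2 hn1.le)
    obtain ⟨m, hm⟩ := Nat.exists_eq_succ_of_ne_zero hn0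
    have hmle : B m ≤ s := by
      by_contra h
      push_neg at h
      exact Nat.find_min hex (by omega) h
    exact mem_iUnion.2 ⟨m, hmle, by rw [← Nat.succ_eq_add_one, ← hm]; exact hn1⟩
  -- summing
  have hsum : (∑' k, ENNReal.ofReal (2 * (τ (k + 1) - τ k))) ≤ ENNReal.ofReal (2 * T) := by
    apply Summable.tsum_le_of_sum_le ENNReal.summable
    intro s
    set n := s.sup id + 1 with hndef
    have hsub : s ⊆ Finset.range n := by
      intro i hi
      exact Finset.mem_range.2 (Nat.lt_succ_of_le (Finset.le_sup (f := id) hi))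
    calc (∑ k ∈ s, ENNReal.ofReal (2 * (τ (k + 1) - τ k)))
        ≤ ∑ k ∈ Finset.range n, ENNReal.ofReal (2 * (τ (k + 1) - τ k)) :=
          Finset.sum_le_sum_of_subset hsub
      _ = ENNReal.ofReal (∑ k ∈ Finset.range n, 2 * (τ (k + 1) - τ k)) := by
          rw [ENNReal.ofReal_sum_of_nonneg]
          intro i _
          have := (hτlt i).le
          linarith
      _ ≤ ENNReal.ofReal (2 * T) := by
          apply ENNReal.ofReal_le_ofReal
          rw [← Finset.mul_sum, Finset.sum_range_sub (f := τ)]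
          have h1 : τ n < T := (hτmem n).2
          have h2 : 0 ≤ τ 0 := (hτmem 0).1
          linarith
  refine ⟨B 0, by have : (0:ℝ) < 2 ^ (0 + 1) := by norm_num
                  simp only [hBdef]; nlinarith, ?_⟩
  calc (∫⁻ s in Ioi (B 0), (ENNReal.ofReal (b s))⁻¹)
      ≤ ∫⁻ s in ⋃ k, Ico (B k) (B (k + 1)), (ENNReal.ofReal (b s))⁻¹ :=
        lintegral_mono_set hcover
    _ ≤ ∑' k, ∫⁻ s in Ico (B k) (B (k + 1)), (ENNReal.ofReal (b s))⁻¹ :=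
        lintegral_iUnion_le _ _
    _ ≤ ∑' k, ENNReal.ofReal (2 * (τ (k + 1) - τ k)) := ENNReal.tsum_le_tsum hpiece
    _ ≤ ENNReal.ofReal (2 * T) := hsum
    _ < ⊤ := ENNReal.ofReal_lt_top
end

section
/- Let b : ℝ → ℝ be nonnegative, locally Lipschitz and nondecreasing on (0,∞), let a ≥ 0, and let g : [0,∞) → ℝ be continuous with limsup_{t→∞} inf_{0≤h≤1} g(t+h) = ∞. If b satisfies the Osgood condition ∫_c^∞ 1/b(s) ds < ∞ for some c > 0, then the solution X of X(t) = a + ∫₀ᵗ b(X(s)) ds + g(t) blows up in finite time (no global solution exists). -/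
open MeasureTheory Set Filter
open scoped ENNReal Topology

/-- If `g` is continuous with `limsup_{t→∞} inf_{0≤h≤1} g(t+h) = ∞` and `b` satisfies the
Osgood condition, then no global solution of `X(t) = a + ∫₀ᵗ b(X(s)) ds + g(t)` exists. -/
theorem stmt_2 (b : ℝ → ℝ) (hb0 : ∀ x, 0 ≤ b x) (hbLip : LocallyLipschitz b)
    (hbmono : MonotoneOn b (Set.Ioi (0:ℝ)))
    (a : ℝ) (ha : 0 ≤ a)
    (g : ℝ → ℝ) (hg : ContinuousOn g (Set.Ici 0))
    (hgrow : ∀ M : ℝ, ∃ᶠ t in atTop, ∀ h ∈ Set.Icc (0:ℝ) 1, M < g (t + h))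
    (hosgood : ∃ c > 0, (∫⁻ s in Set.Ioi c, (ENNReal.ofReal (b s))⁻¹) < ⊤) :
    ¬ ∃ X : ℝ → ℝ, ContinuousOn X (Set.Ici 0) ∧
      ∀ t : ℝ, 0 ≤ t → X t = a + (∫ s in (0:ℝ)..t, b (X s)) + g t := by
  rintro ⟨X, hXc, hX⟩
  obtain ⟨c, hc, hI⟩ := hosgood
  have hbcont : Continuous b := hbLip.continuous
  set f : ℝ → ℝ≥0∞ := fun s => (ENNReal.ofReal (b s))⁻¹ with hf
  have hfm : Measurable f := hbcont.measurable.ennreal_ofReal.inv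
  -- b is positive on (c, ∞)
  have hbpos : ∀ y, c < y → 0 < b y := by
    intro y hy
    rcases (hb0 y).lt_or_eq with h | h
    · exact h
    exfalso
    have hzero : ∀ s ∈ Ioc c y, f s = ⊤ := by
      intro s hs
      have hs0 : s ∈ Ioi (0:ℝ) := lt_trans hc hs.1
      have hy0 : y ∈ Ioi (0:ℝ) := lt_trans hc hy
      have : b s = 0 := le_antisymm (by simpa [← h] using hbmono hs0 hy0 hs.2) (hb0 s)
      simp [hf, this]
    have h1 : (∫⁻ s in Ioc c y, f s) = ⊤ := by
      rw [setLIntegral_congr_fun measurableSet_Ioc hzero]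
      rw [setLIntegral_const]
      rw [ENNReal.top_mul]
      simp only [Real.volume_Ioc]
      simp [ENNReal.ofReal_eq_zero, not_le, sub_pos, hy]
    have h2 : (∫⁻ s in Ioc c y, f s) ≤ ∫⁻ s in Ioi c, f s :=
      lintegral_mono_set Ioc_subset_Ioi_self
    rw [h1] at h2
    exact (lt_irrefl _ (lt_of_le_of_lt h2 hI)).elim
  -- choose M > c with small tail
  obtain ⟨M, hMc, hMtail⟩ : ∃ M, c < M ∧ (∫⁻ s in Ioi M, f s) < 1 := by
    set μ : Measure ℝ := volume.withDensity f with hμ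
    have hap : ∀ A : Set ℝ, MeasurableSet A → μ A = ∫⁻ s in A, f s := by
      intro A hA; rw [hμ, withDensity_apply f hA]
    have htend : Tendsto (μ ∘ fun n : ℕ => Ioi (c + 1 + n)) atTop (𝓝 (μ (⋂ n : ℕ, Ioi (c + 1 + n)))) := by
      refine tendsto_measure_iInter_atTop (fun n => measurableSet_Ioi.nullMeasurableSet)
        (fun m n hmn => Ioi_subset_Ioi (by have : (m:ℝ) ≤ n := Nat.cast_le.2 hmn; linarith)) ⟨0, ?_⟩
      rw [hap _ measurableSet_Ioi]
      refine ne_of_lt (lt_of_le_of_lt (lintegral_mono_set (Ioi_subset_Ioi (by norm_num))) hI)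
    have hempty : (⋂ n : ℕ, Ioi (c + 1 + (n:ℝ))) = ∅ := by
      ext x
      simp only [mem_iInter, mem_Ioi, mem_empty_iff_false, iff_false, not_forall, not_lt]
      obtain ⟨n, hn⟩ := exists_nat_ge (x - c - 1)
      exact ⟨n, by linarith⟩
    rw [hempty] at htend
    simp only [measure_empty] at htend
    have : ∀ᶠ n : ℕ in atTop, (μ ∘ fun n : ℕ => Ioi (c + 1 + n)) n < 1 :=
      htend.eventually_lt_const (by norm_num)
    obtain ⟨n, hn⟩ := this.exists
    refine ⟨c + 1 + n, by have : (0:ℝ) ≤ n := Nat.cast_nonneg n; linarith, ?_⟩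
    rw [← hap _ measurableSet_Ioi]; exact hn
  -- choose t₀ with g large on [t₀, t₀+1]
  obtain ⟨t₀, ht₀1, hgt⟩ := frequently_atTop.mp (hgrow M) 1
  have ht₀0 : (0:ℝ) < t₀ := lt_of_lt_of_le one_pos ht₀1
  set F : ℝ → ℝ := fun t => ∫ s in (0:ℝ)..t, b (X s) with hF
  have hbX : ContinuousOn (fun s => b (X s)) (Ici 0) := hbcont.comp_continuousOn hXc
  have hInt : ∀ u v : ℝ, 0 ≤ u → 0 ≤ v → IntervalIntegrable (fun s => b (X s)) volume u v := by
    intro u v hu hv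
    exact (hbX.mono (fun x hx => by
      rcases le_total u v with h | h <;>
        simp_all [uIcc_of_le, uIcc_of_ge, mem_Icc] <;> linarith [hx.1])).intervalIntegrable
  have hFmono : ∀ u v : ℝ, 0 ≤ u → u ≤ v → F u ≤ F v := by
    intro u v hu huv
    have : F v = F u + ∫ s in u..v, b (X s) := by
      rw [hF]
      exact (intervalIntegral.integral_add_adjacent_intervals (hInt 0 u le_rfl hu)
        (hInt u v hu (hu.trans huv))).symm
    rw [this]
    have : (0:ℝ) ≤ ∫ s in u..v, b (X s) :=
      intervalIntegral.integral_nonneg huv (fun x _ => hb0 _)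
    linarith
  have hF0 : 0 ≤ F t₀ := by
    have := hFmono 0 t₀ le_rfl ht₀0.le
    simpa [hF, intervalIntegral.integral_same] using this
  set Y : ℝ → ℝ := fun t => M + (F t - F t₀) with hY
  -- the function φ
  set φ : ℝ → ℝ := fun y => ∫ s in M..y, (b s)⁻¹ with hφ
  have hbinv_cont : ContinuousOn (fun s => (b s)⁻¹) (Ioi c) :=
    (hbcont.continuousOn.inv₀ (fun x hx => ne_of_gt (hbpos x hx)))
  have hφlt : ∀ y, M ≤ y → φ y < 1 := by
    intro y hMy
    have hsub : Ioc M y ⊆ Ioi c := fun s hs => lt_trans hMc hs.1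
    have heq : φ y = ∫ s in Ioc M y, (b s)⁻¹ := by
      rw [hφ]; exact intervalIntegral.integral_of_le hMy
    have hmeas : AEStronglyMeasurable (fun s => (b s)⁻¹) (volume.restrict (Ioc M y)) :=
      (hbcont.measurable.inv.stronglyMeasurable).aestronglyMeasurable
    have h2 : ∫ s in Ioc M y, (b s)⁻¹ =
        (∫⁻ s in Ioc M y, ENNReal.ofReal ((b s)⁻¹)).toReal :=
      integral_eq_lintegral_of_nonneg_ae (ae_of_all _ fun s => inv_nonneg.2 (hb0 s)) hmeas
    have h3 : (∫⁻ s in Ioc M y, ENNReal.ofReal ((b s)⁻¹)) = ∫⁻ s in Ioc M y, f s := by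
      refine setLIntegral_congr_fun measurableSet_Ioc (fun s hs => ?_)
      rw [hf]; exact ENNReal.ofReal_inv_of_pos (hbpos s (hsub hs))
    have h4 : (∫⁻ s in Ioc M y, f s) < 1 :=
      lt_of_le_of_lt (lintegral_mono_set Ioc_subset_Ioi_self) hMtail
    rw [heq, h2, h3]
    calc (∫⁻ s in Ioc M y, f s).toReal < (1:ℝ≥0∞).toReal := by
          refine (ENNReal.toReal_lt_toReal (ne_top_of_lt h4) ENNReal.one_ne_top).2 h4
      _ = 1 := by simp
  -- derivative of φ
  have hφ' : ∀ y, c < y → HasDerivAt φ ((b y)⁻¹) y := by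
    intro y hy
    refine intervalIntegral.integral_hasDerivAt_right ?_ ?_ ?_
    · refine (hbinv_cont.mono fun x hx => ?_).intervalIntegrable
      rcases le_total M y with h | h <;>
        simp_all [uIcc_of_le, uIcc_of_ge, mem_Icc, mem_Ioi] <;> linarith [hx.1]
    · exact (hbcont.measurable.inv.stronglyMeasurable).stronglyMeasurableAtFilter
    · exact hbinv_cont.continuousAt (Ioi_mem_nhds hy)
  -- derivative of F
  have hF' : ∀ t : ℝ, 0 < t → HasDerivAt F (b (X t)) t := by
    intro t ht
    refine intervalIntegral.integral_hasDerivAt_right (hInt 0 t le_rfl ht.le) ?_ ?_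
    · refine AEStronglyMeasurable.stronglyMeasurableAtFilter_of_mem
        ((hbX.mono Ioi_subset_Ici_self).aestronglyMeasurable measurableSet_Ioi)
        (Ioi_mem_nhds ht)
    · exact (hbX.continuousAt (Ici_mem_nhds ht))
  -- facts on [t₀, t₀+1]
  have hYM : ∀ t, t₀ ≤ t → M ≤ Y t := by
    intro t ht
    have := hFmono t₀ t ht₀0.le ht
    simp [hY]; linarith
  have hXY : ∀ t, t ∈ Icc t₀ (t₀ + 1) → Y t ≤ X t := by
    intro t ht
    have hgM : M < g t := by
      have := hgt (t - t₀) ⟨by linarith [ht.1], by linarith [ht.2]⟩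
      simpa [add_sub_cancel] using this
    have hXt := hX t (by linarith [ht.1, ht₀0])
    rw [hXt, hY]
    simp only
    linarith
  -- H := φ ∘ Y - id is monotone on [t₀, t₀+1]
  set H : ℝ → ℝ := fun t => φ (Y t) - t with hH
  have hHderiv : ∀ t ∈ Icc t₀ (t₀ + 1),
      HasDerivAt H ((b (Y t))⁻¹ * b (X t) - 1) t := by
    intro t ht
    have ht0 : 0 < t := lt_of_lt_of_le ht₀0 ht.1
    have hYt : HasDerivAt Y (b (X t)) t := by
      have := (hF' t ht0).sub_const (F t₀)
      exact (this.const_add M)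
    have hcY : c < Y t := lt_of_lt_of_le hMc (hYM t ht.1)
    have hcomp : HasDerivAt (fun u => φ (Y u)) ((b (Y t))⁻¹ * b (X t)) t :=
      (hφ' (Y t) hcY).comp t hYt
    exact hcomp.sub (hasDerivAt_id' t)
  have hHd_nonneg : ∀ t ∈ Icc t₀ (t₀ + 1), 0 ≤ (b (Y t))⁻¹ * b (X t) - 1 := by
    intro t ht
    have hcY : c < Y t := lt_of_lt_of_le hMc (hYM t ht.1)
    have hbY : 0 < b (Y t) := hbpos _ hcY
    have hbXY : b (Y t) ≤ b (X t) :=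
      hbmono (lt_trans hc hcY) (lt_trans hc (lt_of_lt_of_le hcY (hXY t ht))) (hXY t ht)
    have : 1 ≤ (b (Y t))⁻¹ * b (X t) := by
      rw [inv_mul_eq_div, le_div_iff₀ hbY, one_mul]; exact hbXY
    linarith
  have hHmono : MonotoneOn H (Icc t₀ (t₀ + 1)) := by
    refine monotoneOn_of_deriv_nonneg (convex_Icc _ _) ?_ ?_ ?_
    · intro t ht
      exact ((hHderiv t ht).continuousAt).continuousWithinAt
    · intro t ht
      rw [interior_Icc] at ht
      exact ((hHderiv t (Ioo_subset_Icc_self ht)).differentiableAt).differentiableWithinAt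
    · intro t ht
      rw [interior_Icc] at ht
      rw [(hHderiv t (Ioo_subset_Icc_self ht)).deriv]
      exact hHd_nonneg t (Ioo_subset_Icc_self ht)
  have hkey : H t₀ ≤ H (t₀ + 1) :=
    hHmono ⟨le_rfl, by linarith⟩ ⟨by linarith, le_rfl⟩ (by linarith)
  have hYt₀ : Y t₀ = M := by simp [hY]
  have hφM : φ M = 0 := by simp [hφ, intervalIntegral.integral_same]
  have hfinal : (1:ℝ) ≤ φ (Y (t₀ + 1)) := by
    have : φ (Y t₀) - t₀ ≤ φ (Y (t₀ + 1)) - (t₀ + 1) := hkey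
    rw [hYt₀, hφM] at this
    linarith
  exact absurd hfinal (not_le.2 (hφlt _ (hYM _ (by linarith))))
end

section
/- Let b : ℝ → ℝ be nonnegative, locally Lipschitz and nondecreasing on (0,∞). Suppose X : [0,∞) → ℝ satisfies X(t) ≥ a + ∫₀ᵗ b(X(s)) ds for all t ∈ [0,T], where a > 0 and T := ∫_a^∞ 1/b(s) ds < ∞. Then X cannot be finite on all of [0,T]; i.e., X blows up by time T. -/
open MeasureTheory Set Filter
open scoped ENNReal

lemma aux_ba_pos (b : ℝ → ℝ) (hb0 : ∀ x, 0 ≤ b x) (hbLip : LocallyLipschitz b)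
    (a : ℝ)
    (hfin : (∫⁻ s in Set.Ioi a, (ENNReal.ofReal (b s))⁻¹) ≠ ⊤) : 0 < b a := by
  rcases (hb0 a).lt_or_eq with h | h
  · exact h
  exfalso
  obtain ⟨K, U, hU, hK⟩ := hbLip a
  obtain ⟨δ, hδ, hball⟩ := Metric.mem_nhds_iff.mp hU
  set c : ℝ := max (K : ℝ) 1 with hc_def
  have hc : 0 < c := lt_of_lt_of_le one_pos (le_max_right _ _)
  have hbd : ∀ s ∈ Set.Ioo a (a + δ), b s ≤ c * (s - a) := by
    intro s hs
    have h1 : (0:ℝ) < s - a := by linarith [hs.1]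
    have hsU : s ∈ U := hball (by
      rw [Metric.mem_ball, Real.dist_eq, abs_of_pos h1]; linarith [hs.2])
    have haU : a ∈ U := hball (Metric.mem_ball_self hδ)
    have := hK.dist_le_mul s hsU a haU
    rw [Real.dist_eq, Real.dist_eq, ← h, abs_of_pos h1] at this
    calc b s = b s - 0 := by ring
    _ ≤ |b s - 0| := le_abs_self _
    _ ≤ K * (s - a) := this
    _ ≤ c * (s - a) := by
        apply mul_le_mul_of_nonneg_right (le_max_left _ _) h1.le
  have key : (∫⁻ s in Set.Ioo a (a + δ), ENNReal.ofReal ((c * (s - a))⁻¹)) = ⊤ := by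
    by_contra hne
    have hmeas : Measurable fun s : ℝ => (c * (s - a))⁻¹ :=
      ((continuous_const.mul (continuous_sub_right a)).measurable).inv
    have hint : IntegrableOn (fun s => (c * (s - a))⁻¹) (Set.Ioo a (a + δ)) := by
      refine ⟨hmeas.aestronglyMeasurable.restrict, ?_⟩
      rw [hasFiniteIntegral_iff_ofReal ?_]
      · exact lt_top_iff_ne_top.2 hne
      · filter_upwards [ae_restrict_mem measurableSet_Ioo] with s hs
        have : (0:ℝ) < s - a := by linarith [hs.1]
        positivity
    have hint2 : IntegrableOn (fun s => (s - a)⁻¹) (Set.Ioo a (a + δ)) := by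
      have h2 := hint.const_mul c
      refine IntegrableOn.congr_fun h2 (fun s hs => ?_) measurableSet_Ioo
      rw [mul_inv, ← mul_assoc, mul_inv_cancel₀ hc.ne', one_mul]
    have h3 : IntervalIntegrable (fun s => (s - a)⁻¹) volume a (a + δ) := by
      rw [intervalIntegrable_iff_integrableOn_Ioo_of_le (by linarith)]
      exact hint2
    rw [intervalIntegrable_sub_inv_iff] at h3
    rcases h3 with h1 | h2
    · linarith
    · exact h2 Set.left_mem_uIcc
  apply hfin
  rw [eq_top_iff, ← key]
  calc (∫⁻ s in Set.Ioo a (a + δ), ENNReal.ofReal ((c * (s - a))⁻¹))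
      ≤ ∫⁻ s in Set.Ioo a (a + δ), (ENNReal.ofReal (b s))⁻¹ := by
        refine setLIntegral_mono' measurableSet_Ioo (fun s hs => ?_)
        have h1 : (0:ℝ) < s - a := by linarith [hs.1]
        rw [ENNReal.ofReal_inv_of_pos (by positivity)]
        exact ENNReal.inv_le_inv.mpr (ENNReal.ofReal_le_ofReal (hbd s hs))
    _ ≤ ∫⁻ s in Set.Ioi a, (ENNReal.ofReal (b s))⁻¹ :=
        lintegral_mono_set Set.Ioo_subset_Ioi_self

/-- If `a > 0` and the Osgood integral `T = ∫_a^∞ ds / b(s)` is finite, then there is no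
finite continuous function `X` on `[0,T]` with `X(t) ≥ a + ∫₀ᵗ b(X(s)) ds`;
i.e. `X` blows up by time `T`. -/
theorem stmt_3 (b : ℝ → ℝ) (hb0 : ∀ x, 0 ≤ b x) (hbLip : LocallyLipschitz b)
    (hbmono : MonotoneOn b (Set.Ioi (0:ℝ)))
    (a : ℝ) (ha : 0 < a)
    (hfin : (∫⁻ s in Set.Ioi a, (ENNReal.ofReal (b s))⁻¹) ≠ ⊤)
    (T : ℝ) (hT : T = (∫⁻ s in Set.Ioi a, (ENNReal.ofReal (b s))⁻¹).toReal) :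
    ¬ ∃ X : ℝ → ℝ, ContinuousOn X (Set.Icc 0 T) ∧
      ∀ t ∈ Set.Icc (0:ℝ) T, a + (∫ s in (0:ℝ)..t, b (X s)) ≤ X t := by
  rintro ⟨X0, hXc, hX0⟩
  have hba : 0 < b a := aux_ba_pos b hb0 hbLip a hfin
  have hbcont : Continuous b := hbLip.continuous
  have hT0 : (0:ℝ) ≤ T := by rw [hT]; exact ENNReal.toReal_nonneg
  set X : ℝ → ℝ := Set.IccExtend hT0 ((Set.Icc (0:ℝ) T).restrict X0) with hX_def
  have hXcont : Continuous X := continuous_IccExtend_iff.mpr hXc.restrict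
  have hXeq : ∀ t ∈ Set.Icc (0:ℝ) T, X t = X0 t := by
    intro t ht
    rw [hX_def, Set.IccExtend_of_mem _ _ ht]
    rfl
  have hbpos : ∀ s, a ≤ s → 0 < b s := fun s hs =>
    lt_of_lt_of_le hba (hbmono (Set.mem_Ioi.2 ha) (Set.mem_Ioi.2 (lt_of_lt_of_le ha hs)) hs)
  have hbX : Continuous fun s => b (X s) := hbcont.comp hXcont
  set G : ℝ → ℝ := fun t => a + ∫ s in (0:ℝ)..t, b (X s) with hG_def
  have hG_deriv : ∀ t : ℝ, HasDerivAt G (b (X t)) t := by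
    intro t
    apply HasDerivAt.const_add
    exact intervalIntegral.integral_hasDerivAt_right (hbX.intervalIntegrable _ _)
      (hbX.aestronglyMeasurable.stronglyMeasurableAtFilter) hbX.continuousAt
  have hGa : ∀ t ∈ Set.Icc (0:ℝ) T, a ≤ G t := by
    intro t ht
    have : (0:ℝ) ≤ ∫ s in (0:ℝ)..t, b (X s) :=
      intervalIntegral.integral_nonneg ht.1 (fun u _ => hb0 _)
    simp only [hG_def]; linarith
  have hXG : ∀ t ∈ Set.Icc (0:ℝ) T, G t ≤ X t := by
    intro t ht
    rw [hXeq t ht]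
    have : (∫ s in (0:ℝ)..t, b (X s)) = ∫ s in (0:ℝ)..t, b (X0 s) := by
      apply intervalIntegral.integral_congr
      intro s hs
      rw [Set.uIcc_of_le ht.1] at hs
      have hs' : s ∈ Set.Icc (0:ℝ) T := ⟨hs.1, le_trans hs.2 ht.2⟩
      simp [hXeq s hs']
    rw [hG_def]; dsimp only; rw [this]
    exact hX0 t ht
  set F : ℝ → ℝ := fun y => ∫ s in a..y, (b s)⁻¹ with hF_def
  have hF_deriv : ∀ y, a ≤ y → HasDerivAt F (b y)⁻¹ y := by
    intro y hy
    apply intervalIntegral.integral_hasDerivAt_right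
    · apply ContinuousOn.intervalIntegrable
      apply ContinuousOn.inv₀ hbcont.continuousOn
      intro s hs
      rw [Set.uIcc_of_le hy] at hs
      exact (hbpos s hs.1).ne'
    · exact (hbcont.measurable.inv.aestronglyMeasurable).stronglyMeasurableAtFilter
    · exact hbcont.continuousAt.inv₀ (hbpos y hy).ne'
  set H : ℝ → ℝ := fun t => F (G t) with hH_def
  have hH_deriv : ∀ t ∈ Set.Icc (0:ℝ) T, HasDerivAt H ((b (G t))⁻¹ * b (X t)) t := by
    intro t ht
    exact (hF_deriv (G t) (hGa t ht)).comp t (hG_deriv t)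
  have hH1 : ∀ t ∈ Set.Icc (0:ℝ) T, (1:ℝ) ≤ (b (G t))⁻¹ * b (X t) := by
    intro t ht
    have h1 : 0 < b (G t) := hbpos _ (hGa t ht)
    have h2 : b (G t) ≤ b (X t) := by
      apply hbmono (Set.mem_Ioi.2 (lt_of_lt_of_le ha (hGa t ht)))
        (Set.mem_Ioi.2 (lt_of_lt_of_le ha (le_trans (hGa t ht) (hXG t ht)))) (hXG t ht)
    rw [inv_mul_eq_div, le_div_iff₀ h1, one_mul]
    exact h2
  -- φ := H - id is monotone on [0, T]
  have hφmono : MonotoneOn (fun t => H t - t) (Set.Icc 0 T) := by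
    apply monotoneOn_of_deriv_nonneg (convex_Icc 0 T)
    · intro t ht
      exact ((hH_deriv t ht).sub (hasDerivAt_id t)).continuousAt.continuousWithinAt
    · intro t ht
      rw [interior_Icc] at ht
      exact (((hH_deriv t (Set.Ioo_subset_Icc_self ht)).sub (hasDerivAt_id t)).differentiableAt).differentiableWithinAt
    · intro t ht
      rw [interior_Icc] at ht
      have ht' := Set.Ioo_subset_Icc_self ht
      have hd : HasDerivAt (fun t => H t - t) (((b (G t))⁻¹ * b (X t)) - 1) t :=
        (hH_deriv t ht').sub (hasDerivAt_id t)
      rw [hd.deriv]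
      have := hH1 t ht'
      linarith
  have hG0 : G 0 = a := by simp [hG_def]
  have hH0 : H 0 = 0 := by
    rw [hH_def]; dsimp only; rw [hG0, hF_def]; exact intervalIntegral.integral_same
  have hTle : T ≤ F (G T) := by
    have h1 := hφmono (Set.left_mem_Icc.2 hT0) (Set.right_mem_Icc.2 hT0) hT0
    dsimp only at h1
    rw [hH0] at h1
    have h2 : H T = F (G T) := rfl
    linarith
  -- Now show F (G T) < T
  set y := G T with hy_def
  have hy : a ≤ y := hGa T (Set.right_mem_Icc.2 hT0)
  have hmeasf : Measurable fun s : ℝ => (ENNReal.ofReal (b s))⁻¹ :=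
    (ENNReal.measurable_ofReal.comp hbcont.measurable).inv
  set A := ∫⁻ s in Set.Ioc a y, (ENNReal.ofReal (b s))⁻¹ with hA_def
  set B := ∫⁻ s in Set.Ioi y, (ENNReal.ofReal (b s))⁻¹ with hB_def
  have hsplit : A + B = ∫⁻ s in Set.Ioi a, (ENNReal.ofReal (b s))⁻¹ := by
    rw [hA_def, hB_def, ← lintegral_union measurableSet_Ioi
      (Set.Ioc_disjoint_Ioi le_rfl), Set.Ioc_union_Ioi_eq_Ioi hy]
  have hA_top : A ≠ ⊤ := by
    intro h; apply hfin; rw [← hsplit, h]; simp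
  have hB_top : B ≠ ⊤ := by
    intro h; apply hfin; rw [← hsplit, h]; simp
  have hBpos : 0 < B := by
    rw [hB_def, lintegral_pos_iff_support hmeasf]
    have : (Function.support fun s : ℝ => (ENNReal.ofReal (b s))⁻¹) = Set.univ := by
      ext s; simp only [Function.mem_support, Set.mem_univ, iff_true]
      exact (ENNReal.inv_ne_zero).2 ENNReal.ofReal_ne_top
    rw [this, Measure.restrict_apply MeasurableSet.univ, Set.univ_inter, Real.volume_Ioi]
    exact ENNReal.zero_lt_top
  have hFy : F y = A.toReal := by
    rw [hF_def]
    dsimp only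
    rw [intervalIntegral.integral_of_le hy,
      MeasureTheory.integral_eq_lintegral_of_nonneg_ae
        (Filter.Eventually.of_forall fun s => inv_nonneg.2 (hb0 s))
        (hbcont.measurable.inv.aestronglyMeasurable)]
    congr 1
    rw [hA_def]
    apply setLIntegral_congr_fun measurableSet_Ioc
    intro s hs; dsimp only
    rw [ENNReal.ofReal_inv_of_pos (hbpos s hs.1.le)]
  have hFlt : F y < T := by
    rw [hFy, hT, ← hsplit, ENNReal.toReal_add hA_top hB_top]
    have : 0 < B.toReal := ENNReal.toReal_pos hBpos.ne' hB_top
    linarith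
  linarith
end

section
/- Let g : [0,∞) × [0,1] → ℝ be continuous, let ψ(t) = t^{1/4}√(2 log log t) for t > e, and suppose: (i) limsup_{t→∞} g(t, x₀)/ψ(t) = 1 for some fixed x₀ ∈ [0,1], and (ii) sup_{s,t ∈ [n, n+2], x,y ∈ [0,1]} |g(t,x) − g(s,y)| / ψ(n) → 0 as n → ∞ over integers n. Then there exists a sequence t_n → ∞ such that inf_{h∈[0,1], x∈[0,1]} g(t_n + h, x) → ∞. -/
open Real Set Filter

noncomputable def psi (t : ℝ) : ℝ := t ^ ((1:ℝ)/4) * Real.sqrt (2 * Real.log (Real.log t))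

lemma e_lt_3 : Real.exp 1 < 3 := lt_trans Real.exp_one_lt_d9 (by norm_num)

lemma one_lt_log {t : ℝ} (ht : 3 ≤ t) : 1 < Real.log t := by
  have h : Real.exp 1 < t := lt_of_lt_of_le e_lt_3 ht
  calc (1:ℝ) = Real.log (Real.exp 1) := (Real.log_exp 1).symm
    _ < Real.log t := Real.log_lt_log (Real.exp_pos 1) h

lemma psi_pos {t : ℝ} (ht : 3 ≤ t) : 0 < psi t := by
  have h1 : (0:ℝ) < t := by linarith
  have h2 : 0 < Real.log (Real.log t) := Real.log_pos (one_lt_log ht)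
  exact mul_pos (Real.rpow_pos_of_pos h1 _) (Real.sqrt_pos.mpr (by linarith))

lemma psi_mono {s t : ℝ} (hs : 3 ≤ s) (hst : s ≤ t) : psi s ≤ psi t := by
  have hls : 0 < Real.log s := lt_trans one_pos (one_lt_log hs)
  have hll : Real.log s ≤ Real.log t := Real.log_le_log (by linarith) hst
  have hlll : Real.log (Real.log s) ≤ Real.log (Real.log t) := Real.log_le_log hls hll
  have h1 : s ^ ((1:ℝ)/4) ≤ t ^ ((1:ℝ)/4) :=
    Real.rpow_le_rpow (by linarith) hst (by norm_num)
  have h2 : Real.sqrt (2 * Real.log (Real.log s)) ≤ Real.sqrt (2 * Real.log (Real.log t)) :=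
    Real.sqrt_le_sqrt (by linarith)
  exact mul_le_mul h1 h2 (Real.sqrt_nonneg _) (Real.rpow_nonneg (by linarith) _)

lemma exp_one_le_log_sixteen : Real.exp 1 ≤ Real.log 16 := by
  have h2 : (0.6931471803 : ℝ) < Real.log 2 := Real.log_two_gt_d9
  have h16 : Real.log 16 = 4 * Real.log 2 := by
    have : (16:ℝ) = 2 ^ (4:ℕ) := by norm_num
    rw [this, Real.log_pow]; norm_num
  have he := Real.exp_one_lt_d9
  rw [h16]; nlinarith

lemma psi_tendsto : Filter.Tendsto (fun m : ℕ => psi m) Filter.atTop Filter.atTop := by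
  have h1 : Filter.Tendsto (fun m : ℕ => ((m:ℝ)) ^ ((1:ℝ)/4)) Filter.atTop Filter.atTop :=
    (tendsto_rpow_atTop (by norm_num)).comp tendsto_natCast_atTop_atTop
  apply tendsto_atTop_mono' _ _ h1
  filter_upwards [eventually_ge_atTop 16] with m hm
  have hm' : (16:ℝ) ≤ (m:ℝ) := by exact_mod_cast hm
  have hlog : Real.exp 1 ≤ Real.log m :=
    le_trans exp_one_le_log_sixteen (Real.log_le_log (by norm_num) hm')
  have hll : (1:ℝ) ≤ Real.log (Real.log m) := by
    calc (1:ℝ) = Real.log (Real.exp 1) := (Real.log_exp 1).symm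
      _ ≤ Real.log (Real.log m) := Real.log_le_log (Real.exp_pos 1) hlog
  have hs : (1:ℝ) ≤ Real.sqrt (2 * Real.log (Real.log m)) := by
    rw [show (1:ℝ) = Real.sqrt 1 by simp]
    exact Real.sqrt_le_sqrt (by linarith)
  have := mul_le_mul_of_nonneg_left hs (Real.rpow_nonneg (by positivity : (0:ℝ) ≤ (m:ℝ)) ((1:ℝ)/4))
  simpa [psi] using this

lemma abs_le_osc (g : ℝ → ℝ → ℝ)
    (hcont : ContinuousOn (fun p : ℝ × ℝ => g p.1 p.2) (Set.Ici (0:ℝ) ×ˢ Set.Icc (0:ℝ) 1))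
    (m : ℕ) {s t x y : ℝ} (hs : s ∈ Set.Icc (m:ℝ) ((m:ℝ)+2)) (ht : t ∈ Set.Icc (m:ℝ) ((m:ℝ)+2))
    (hx : x ∈ Set.Icc (0:ℝ) 1) (hy : y ∈ Set.Icc (0:ℝ) 1) :
    |g t x - g s y| ≤ sSup {v : ℝ | ∃ s ∈ Set.Icc (m:ℝ) ((m:ℝ)+2), ∃ t ∈ Set.Icc (m:ℝ) ((m:ℝ)+2),
        ∃ x ∈ Set.Icc (0:ℝ) 1, ∃ y ∈ Set.Icc (0:ℝ) 1, v = |g t x - g s y|} := by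
  have hK : IsCompact (Set.Icc (m:ℝ) ((m:ℝ)+2) ×ˢ Set.Icc (0:ℝ) 1) :=
    isCompact_Icc.prod isCompact_Icc
  have hsub : Set.Icc (m:ℝ) ((m:ℝ)+2) ×ˢ Set.Icc (0:ℝ) 1 ⊆ Set.Ici (0:ℝ) ×ˢ Set.Icc (0:ℝ) 1 := by
    apply Set.prod_mono_left
    intro a ha
    exact le_trans (by positivity) ha.1
  obtain ⟨C, hC⟩ := hK.exists_bound_of_continuousOn (hcont.mono hsub)
  apply le_csSup
  · refine ⟨2*C, ?_⟩
    rintro v ⟨s', hs', t', ht', x', hx', y', hy', rfl⟩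
    have h1 := hC (t', x') (Set.mk_mem_prod ht' hx')
    have h2 := hC (s', y') (Set.mk_mem_prod hs' hy')
    simp only [Real.norm_eq_abs] at h1 h2
    calc |g t' x' - g s' y'| ≤ |g t' x'| + |g s' y'| := abs_sub _ _
      _ ≤ 2*C := by linarith
  · exact ⟨s, hs, t, ht, x, hx, y, hy, rfl⟩

/-- Deterministic core of Proposition `sup2`: if a continuous `g` on `[0,∞)×[0,1]`
satisfies the law of iterated logarithm `limsup_{t→∞} g(t,x₀)/ψ(t) = 1` (with
`ψ(t) = t^{1/4}√(2 log log t)`) and the oscillation over `[n,n+2]×[0,1]²` is `o(ψ(n))`,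
then there is a sequence `t_n → ∞` with `inf_{h∈[0,1],x∈[0,1]} g(t_n+h,x) → ∞`. -/
theorem stmt_10 (g : ℝ → ℝ → ℝ) (x₀ : ℝ) (hx₀ : x₀ ∈ Set.Icc (0:ℝ) 1)
    (hcont : ContinuousOn (fun p : ℝ × ℝ => g p.1 p.2) (Set.Ici (0:ℝ) ×ˢ Set.Icc (0:ℝ) 1))
    (hlil : Filter.limsup
      (fun t : ℝ => g t x₀ / (t ^ ((1:ℝ)/4) * Real.sqrt (2 * Real.log (Real.log t))))
      Filter.atTop = 1)
    (hosc : Filter.Tendsto (fun n : ℕ =>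
        (sSup {v : ℝ | ∃ s ∈ Set.Icc (n:ℝ) ((n:ℝ)+2), ∃ t ∈ Set.Icc (n:ℝ) ((n:ℝ)+2),
            ∃ x ∈ Set.Icc (0:ℝ) 1, ∃ y ∈ Set.Icc (0:ℝ) 1, v = |g t x - g s y|}) /
          ((n:ℝ) ^ ((1:ℝ)/4) * Real.sqrt (2 * Real.log (Real.log (n:ℝ)))))
      Filter.atTop (nhds 0)) :
    ∃ T : ℕ → ℝ, Filter.Tendsto T Filter.atTop Filter.atTop ∧
      ∀ M : ℝ, ∀ᶠ n in Filter.atTop,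
        ∀ h ∈ Set.Icc (0:ℝ) 1, ∀ x ∈ Set.Icc (0:ℝ) 1, M ≤ g (T n + h) x := by
  set f : ℝ → ℝ := fun t => g t x₀ / psi t with hf
  have hlil' : Filter.limsup f Filter.atTop = 1 := hlil
  -- coboundedness
  have hcb : Filter.IsCoboundedUnder (· ≤ ·) Filter.atTop f := by
    rw [Filter.limsup_eq] at hlil'
    by_contra hnot
    have hbdd : ¬ BddBelow {a : ℝ | ∀ᶠ t in Filter.atTop, f t ≤ a} := by
      intro ⟨b, hb⟩
      exact hnot ⟨b, fun a ha => hb ha⟩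
    rw [Real.sInf_of_not_bddBelow hbdd] at hlil'
    norm_num at hlil'
  have hfreq : ∃ᶠ t in Filter.atTop, (1:ℝ)/2 < f t :=
    Filter.frequently_lt_of_lt_limsup hcb (by rw [hlil']; norm_num)
  have hT : ∀ n : ℕ, ∃ t : ℝ, (n:ℝ) ≤ t ∧ (1:ℝ)/2 < f t := by
    intro n
    obtain ⟨t, ht1, ht2⟩ := Filter.frequently_atTop.mp hfreq (n:ℝ)
    exact ⟨t, ht1, ht2⟩
  choose T hT1 hT2 using hT
  refine ⟨T, tendsto_atTop_mono hT1 tendsto_natCast_atTop_atTop, ?_⟩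
  intro M
  set Osc : ℕ → ℝ := fun m => sSup {v : ℝ | ∃ s ∈ Set.Icc (m:ℝ) ((m:ℝ)+2),
      ∃ t ∈ Set.Icc (m:ℝ) ((m:ℝ)+2),
      ∃ x ∈ Set.Icc (0:ℝ) 1, ∃ y ∈ Set.Icc (0:ℝ) 1, v = |g t x - g s y|} with hOsc
  have hosc' : Filter.Tendsto (fun m : ℕ => Osc m / psi m) Filter.atTop (nhds 0) := hosc
  have h4 : ∀ᶠ m : ℕ in Filter.atTop, Osc m / psi m < 1/4 :=
    hosc'.eventually_lt_const (by norm_num)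
  have hψM : ∀ᶠ m : ℕ in Filter.atTop, 4 * M ≤ psi m := psi_tendsto.eventually_ge_atTop (4*M)
  obtain ⟨N, hN⟩ := Filter.eventually_atTop.mp (h4.and hψM)
  filter_upwards [Filter.eventually_ge_atTop (N + 4)] with n hn
  intro h hh x hx
  have hn4 : (4:ℝ) ≤ (n:ℝ) := by
    have : 4 ≤ n := by omega
    exact_mod_cast this
  have ht : (n:ℝ) ≤ T n := hT1 n
  have ht3 : (3:ℝ) ≤ T n := by linarith
  set m : ℕ := ⌊T n⌋₊ with hm
  have hmn : n ≤ m := Nat.le_floor ht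
  have hmN : N ≤ m := le_trans (by omega) hmn
  have hm3 : (3:ℝ) ≤ (m:ℝ) := by
    have : (4:ℕ) ≤ m := le_trans (by omega) hmn
    have : (4:ℝ) ≤ (m:ℝ) := by exact_mod_cast this
    linarith
  have hmle : (m:ℝ) ≤ T n := Nat.floor_le (by linarith)
  have hmlt : T n < (m:ℝ) + 1 := Nat.lt_floor_add_one _
  obtain ⟨hOm, hψm⟩ := hN m hmN
  have hψmpos : 0 < psi m := psi_pos hm3
  have hOm' : Osc m < psi m / 4 := by
    rw [div_lt_iff₀ hψmpos] at hOm; linarith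
  have hψtpos : 0 < psi (T n) := psi_pos ht3
  have hgt : psi (T n) / 2 < g (T n) x₀ := by
    have := hT2 n
    rw [hf] at this
    rw [lt_div_iff₀ hψtpos] at this
    linarith
  have hψmono : psi m ≤ psi (T n) := psi_mono hm3 hmle
  have hmem1 : T n + h ∈ Set.Icc (m:ℝ) ((m:ℝ)+2) :=
    ⟨by linarith [hh.1], by linarith [hh.2]⟩
  have hmem2 : T n ∈ Set.Icc (m:ℝ) ((m:ℝ)+2) := ⟨hmle, by linarith⟩
  have habs : |g (T n + h) x - g (T n) x₀| ≤ Osc m :=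
    abs_le_osc g hcont m hmem2 hmem1 hx hx₀
  have hneg : -(Osc m) ≤ g (T n + h) x - g (T n) x₀ :=
    le_trans (neg_le_neg habs) (neg_abs_le _)
  linarith
end
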